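/- arXiv:1209.2440 — 6 statements merged into one kernel-verified Lean document; each statement's English description precedes it below -/
import Mathlib

section
/- Let X be a connected Kähler manifold and E a holomorphic vector bundle on X. If f is a nearly holomorphic section of E (i.e. annihilated by some iterate of the invariant Cauchy–Riemann operator) and f vanishes on a nonempty open subset U of X, then f = 0 on all of X. -/
/-- The iterated invariant Cauchy–Riemann operator `D̄^m : C^∞(X,E) → C^∞(X, E ⊗ S_m T^{(1,0)})`,
obtained by composing the invariant Cauchy–Riemann operators of the successive bundles. -/
def iterCR {S : ℕ → Type*} [∀ m, AddCommGroup (S m)] [∀ m, Module ℂ (S m)]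
    (D : ∀ m, S m →ₗ[ℂ] S (m + 1)) : ∀ m, S 0 →ₗ[ℂ] S m
  | 0 => LinearMap.id
  | (m + 1) => (D m).comp (iterCR D m)

/-- **Identity theorem for nearly holomorphic sections.**
`S m` plays the role of the smooth sections `C^∞(X, E ⊗ S_m T^{(1,0)})` on the connected Kähler
manifold `X`, `SU m` the smooth sections over the nonempty open subset `U ⊆ X`, `D m` the
invariant Cauchy–Riemann operator `D̄` (at each level), `res` the restriction map, which commutes
with `D̄`. Since `ker D̄ = ker ∂̄` consists of the holomorphic sections, the identity theorem for
holomorphic sections is the hypothesis `hid`. Conclusion: a nearly holomorphic section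
(annihilated by some iterate `D̄^{m+1}`) vanishing on `U` vanishes identically. -/
theorem stmt0
    {S SU : ℕ → Type*} [∀ m, AddCommGroup (S m)] [∀ m, Module ℂ (S m)]
    [∀ m, AddCommGroup (SU m)] [∀ m, Module ℂ (SU m)]
    (D : ∀ m, S m →ₗ[ℂ] S (m + 1))
    (DU : ∀ m, SU m →ₗ[ℂ] SU (m + 1))
    (res : ∀ m, S m →ₗ[ℂ] SU m)
    (hres : ∀ m (f : S m), res (m + 1) (D m f) = DU m (res m f))
    (hid : ∀ m (f : S m), D m f = 0 → res m f = 0 → f = 0)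
    (f : S 0) (m : ℕ)
    (hol : iterCR D (m + 1) f = 0)
    (hU : res 0 f = 0) :
    f = 0 := by
  have key : ∀ k, res k (iterCR D k f) = iterCR DU k (res 0 f) := by
    intro k
    induction k with
    | zero => rfl
    | succ n ih => simp [iterCR, hres, ih]
  induction m with
  | zero => exact hid 0 f hol hU
  | succ n ih =>
    apply ih
    apply hid (n + 1) (iterCR D (n + 1) f)
    · exact hol
    · rw [key, hU]
      simp
end

section
/- On a Kähler manifold X, the nearly holomorphic functions form a filtered algebra: if f is nearly holomorphic of degree at most m and g is nearly holomorphic of degree at most m', then fg is nearly holomorphic of degree at most m + m'. Moreover if f and g are nonzero with exact degrees m and m', then fg has exact degree m + m'. -/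
open scoped BigOperators

/-- `nhSpace O q m` is the space `N^m` of nearly holomorphic functions of degree at most `m`
on a chart of a Kähler manifold: by the local characterization, the span of the functions
`f · q^i` with `f` holomorphic (i.e. `f ∈ O`) and `|i| ≤ m`, where `q_ℓ = ∂Ψ/∂z^ℓ` for a
local Kähler potential `Ψ`. -/
noncomputable def nhSpace {X : Type*} (O : Subalgebra ℂ (X → ℂ)) {n : ℕ} (q : Fin n → X → ℂ) (m : ℕ) :
    Submodule ℂ (X → ℂ) :=
  Submodule.span ℂ
    {h : X → ℂ | ∃ f ∈ O, ∃ i : Fin n → ℕ, (∑ ℓ, i ℓ) ≤ m ∧ h = f * ∏ ℓ, (q ℓ) ^ (i ℓ)}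

section Aux

variable {X : Type*} (O : Subalgebra ℂ (X → ℂ)) {n : ℕ} (q : Fin n → X → ℂ)

lemma nh_mem_of_rep {m : ℕ} {f : X → ℂ} (s : Finset (Fin n → ℕ)) (c : (Fin n → ℕ) → (X → ℂ))
    (hc : ∀ i, c i ∈ O) (hdeg : ∀ i ∈ s, (∑ ℓ, i ℓ) ≤ m)
    (hrep : f = ∑ i ∈ s, c i * ∏ ℓ, (q ℓ) ^ (i ℓ)) : f ∈ nhSpace O q m := by
  subst hrep
  refine Submodule.sum_mem _ fun i hi => ?_
  exact Submodule.subset_span ⟨c i, hc i, i, hdeg i hi, rfl⟩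

lemma nh_rep_of_mem {m : ℕ} {f : X → ℂ} (hf : f ∈ nhSpace O q m) :
    ∃ (s : Finset (Fin n → ℕ)) (c : (Fin n → ℕ) → (X → ℂ)),
      (∀ i, c i ∈ O) ∧ (∀ i ∈ s, (∑ ℓ, i ℓ) ≤ m) ∧
      f = ∑ i ∈ s, c i * ∏ ℓ, (q ℓ) ^ (i ℓ) := by
  induction hf using Submodule.span_induction with
  | mem h hh =>
    obtain ⟨a, ha, i, hi, rfl⟩ := hh
    refine ⟨{i}, fun j => if j = i then a else 0, fun j => ?_, ?_, ?_⟩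
    · dsimp only
      split
      · exact ha
      · exact zero_mem _
    · intro j hj; simp only [Finset.mem_singleton] at hj; subst hj; exact hi
    · simp
  | zero =>
    exact ⟨∅, fun _ => 0, fun _ => zero_mem _, by simp, by simp⟩
  | add x y hx hy ihx ihy =>
    obtain ⟨s₁, c₁, hc₁, hd₁, rfl⟩ := ihx
    obtain ⟨s₂, c₂, hc₂, hd₂, rfl⟩ := ihy
    refine ⟨s₁ ∪ s₂, fun i => (if i ∈ s₁ then c₁ i else 0) + (if i ∈ s₂ then c₂ i else 0),
      fun i => add_mem (by split; exacts [hc₁ i, zero_mem _])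
        (by split; exacts [hc₂ i, zero_mem _]), ?_, ?_⟩
    · intro i hi
      rcases Finset.mem_union.1 hi with h | h
      exacts [hd₁ i h, hd₂ i h]
    · have key : ∀ (s' : Finset (Fin n → ℕ)) (c : (Fin n → ℕ) → (X → ℂ)),
          s' ⊆ s₁ ∪ s₂ →
          (∑ i ∈ s₁ ∪ s₂, (if i ∈ s' then c i else 0) * ∏ ℓ, (q ℓ) ^ (i ℓ))
            = ∑ i ∈ s', c i * ∏ ℓ, (q ℓ) ^ (i ℓ) := by
        intro s' c hsub
        rw [← Finset.sum_subset hsub (fun x _ hx => by simp [hx])]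
        refine Finset.sum_congr rfl fun i hi => by simp [hi]
      simp only [add_mul, Finset.sum_add_distrib]
      rw [key s₁ c₁ Finset.subset_union_left, key s₂ c₂ Finset.subset_union_right]
  | smul a x hx ihx =>
    obtain ⟨s, c, hc, hd, rfl⟩ := ihx
    refine ⟨s, fun i => a • c i, fun i => Subalgebra.smul_mem _ (hc i) a, hd, ?_⟩
    rw [Finset.smul_sum]
    exact Finset.sum_congr rfl fun i _ => (smul_mul_assoc a _ _).symm

noncomputable def lexLinearOrder (n : ℕ) : LinearOrder (Lex (Fin n → ℕ)) :=
  @Pi.Lex.linearOrder (Fin n) (fun _ => ℕ) _ Finite.to_wellFoundedLT _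

lemma lex_add_lt_add_right {a b c : Fin n → ℕ} (h : toLex a < toLex b) :
    toLex (a + c) < toLex (b + c) := by
  obtain ⟨k, hk₁, hk₂⟩ := h
  refine ⟨k, fun j hj => ?_, ?_⟩
  · have h' : a j = b j := hk₁ j hj
    show a j + c j = b j + c j
    rw [h']
  · show a k + c k < b k + c k
    exact Nat.add_lt_add_right hk₂ (c k)

lemma nh_top_coeff {m : ℕ} {f : X → ℂ} (hne : f ≠ 0)
    (s : Finset (Fin n → ℕ)) (c : (Fin n → ℕ) → (X → ℂ))
    (hc : ∀ i, c i ∈ O) (hdeg : ∀ i ∈ s, (∑ ℓ, i ℓ) ≤ m)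
    (hrep : f = ∑ i ∈ s, c i * ∏ ℓ, (q ℓ) ^ (i ℓ))
    (hex : m = 0 ∨ f ∉ nhSpace O q (m - 1)) :
    ∃ i ∈ s, c i ≠ 0 ∧ (∑ ℓ, i ℓ) = m := by
  classical
  by_contra hcon
  push_neg at hcon
  have hsub : f = ∑ i ∈ s.filter (fun i => c i ≠ 0), c i * ∏ ℓ, (q ℓ) ^ (i ℓ) := by
    rw [hrep]
    refine (Finset.sum_filter_of_ne ?_).symm
    intro i _ h hci
    exact h (by rw [hci, zero_mul])
  rcases hex with hm | hnm
  · subst hm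
    apply hne
    rw [hsub]
    apply Finset.sum_eq_zero
    intro i hi
    rw [Finset.mem_filter] at hi
    exact absurd ((hcon i hi.1) hi.2) (by simpa using Nat.le_zero.1 (hdeg i hi.1))
  · apply hnm
    refine nh_mem_of_rep O q _ c hc ?_ hsub
    intro i hi
    rw [Finset.mem_filter] at hi
    have h1 := hdeg i hi.1
    have h2 := hcon i hi.1 hi.2
    omega

end Aux

/-- **Nearly holomorphic functions form a filtered algebra.**
If `f ∈ N^m(X)` and `g ∈ N^{m'}(X)` then `f·g ∈ N^{m+m'}(X)`; moreover for nonzero `f, g` of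
exact degrees `m` and `m'` (i.e. not lying in the next smaller filtration step), the product
`f·g` has exact degree `m + m'`. The hypotheses encode the local characterization: uniqueness
of the coefficients of the expansion in the `q`-monomials (`hindep`), and the identity theorem
for holomorphic functions making them an integral domain (`hdom`). -/
theorem stmt1 {X : Type*} (O : Subalgebra ℂ (X → ℂ)) {n : ℕ} (q : Fin n → X → ℂ)
    (hindep : ∀ (s : Finset (Fin n → ℕ)) (c : (Fin n → ℕ) → (X → ℂ)),
      (∀ i, c i ∈ O) → (∑ i ∈ s, c i * ∏ ℓ, (q ℓ) ^ (i ℓ)) = 0 → ∀ i ∈ s, c i = 0)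
    (hdom : ∀ a b : X → ℂ, a ∈ O → b ∈ O → a * b = 0 → a = 0 ∨ b = 0)
    (f g : X → ℂ) (m m' : ℕ)
    (hf : f ∈ nhSpace O q m) (hg : g ∈ nhSpace O q m') :
    f * g ∈ nhSpace O q (m + m') ∧
      (f ≠ 0 → g ≠ 0 →
        (m = 0 ∨ f ∉ nhSpace O q (m - 1)) →
        (m' = 0 ∨ g ∉ nhSpace O q (m' - 1)) →
        (m + m' = 0 ∨ f * g ∉ nhSpace O q (m + m' - 1))) := by
  classical
  obtain ⟨s, c, hcO, hcd, hcrep⟩ := nh_rep_of_mem O q hf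
  obtain ⟨t, d, hdO, hdd, hdrep⟩ := nh_rep_of_mem O q hg
  -- product expansion over pairs
  have hprod : f * g = ∑ p ∈ s ×ˢ t, (c p.1 * d p.2) * ∏ ℓ, (q ℓ) ^ ((p.1 + p.2) ℓ) := by
    rw [hcrep, hdrep, Finset.sum_mul_sum, ← Finset.sum_product']
    refine Finset.sum_congr rfl fun p _ => ?_
    simp only [Pi.add_apply, pow_add, Finset.prod_mul_distrib]
    ring
  -- grouped expansion
  set K := (s ×ˢ t).image (fun p : (Fin n → ℕ) × (Fin n → ℕ) => p.1 + p.2) with hK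
  set e : (Fin n → ℕ) → (X → ℂ) :=
    fun k => ∑ p ∈ (s ×ˢ t).filter (fun p => p.1 + p.2 = k), c p.1 * d p.2 with he
  have heO : ∀ k, e k ∈ O := by
    intro k
    exact sum_mem fun p _ => mul_mem (hcO p.1) (hdO p.2)
  have hgrp : f * g = ∑ k ∈ K, e k * ∏ ℓ, (q ℓ) ^ (k ℓ) := by
    have hfib := Finset.sum_fiberwise_of_maps_to
      (g := fun p : (Fin n → ℕ) × (Fin n → ℕ) => p.1 + p.2) (t := K)
      (fun p hp => Finset.mem_image_of_mem _ hp)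
      (fun p : (Fin n → ℕ) × (Fin n → ℕ) => (c p.1 * d p.2) * ∏ ℓ, (q ℓ) ^ ((p.1 + p.2) ℓ))
    rw [hprod, ← hfib]
    refine Finset.sum_congr rfl fun k _ => ?_
    simp only [he, Finset.sum_mul]
    refine Finset.sum_congr rfl fun p hp => ?_
    rw [Finset.mem_filter] at hp
    rw [hp.2]
  have hKdeg : ∀ k ∈ K, (∑ ℓ, k ℓ) ≤ m + m' := by
    intro k hk
    rw [hK, Finset.mem_image] at hk
    obtain ⟨p, hp, rfl⟩ := hk
    rw [Finset.mem_product] at hp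
    calc (∑ ℓ, (p.1 + p.2) ℓ) = (∑ ℓ, p.1 ℓ) + ∑ ℓ, p.2 ℓ := by
          simp [Finset.sum_add_distrib]
      _ ≤ m + m' := Nat.add_le_add (hcd p.1 hp.1) (hdd p.2 hp.2)
  refine ⟨nh_mem_of_rep O q K e heO hKdeg hgrp, ?_⟩
  intro hfne hgne hfex hgex
  rcases Nat.eq_zero_or_pos (m + m') with hM | hM
  · exact Or.inl hM
  refine Or.inr ?_
  intro hmem
  -- top coefficients
  obtain ⟨i₀, hi₀s, hi₀ne, hi₀deg⟩ := nh_top_coeff O q hfne s c hcO hcd hcrep hfex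
  obtain ⟨j₀, hj₀t, hj₀ne, hj₀deg⟩ := nh_top_coeff O q hgne t d hdO hdd hdrep hgex
  -- choose lex-maximal elements
  have hAne : (s.filter (fun i => c i ≠ 0 ∧ (∑ ℓ, i ℓ) = m)).Nonempty :=
    ⟨i₀, Finset.mem_filter.2 ⟨hi₀s, hi₀ne, hi₀deg⟩⟩
  have hBne : (t.filter (fun j => d j ≠ 0 ∧ (∑ ℓ, j ℓ) = m')).Nonempty :=
    ⟨j₀, Finset.mem_filter.2 ⟨hj₀t, hj₀ne, hj₀deg⟩⟩
  letI : LinearOrder (Lex (Fin n → ℕ)) := lexLinearOrder n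
  obtain ⟨i₁, hi₁, hi₁max⟩ := Finset.exists_max_image _ (fun i : Fin n → ℕ => (toLex i : Lex (Fin n → ℕ))) hAne
  obtain ⟨j₁, hj₁, hj₁max⟩ := Finset.exists_max_image _ (fun j : Fin n → ℕ => (toLex j : Lex (Fin n → ℕ))) hBne
  rw [Finset.mem_filter] at hi₁ hj₁
  set k₀ := i₁ + j₁ with hk₀
  have hk₀deg : (∑ ℓ, k₀ ℓ) = m + m' := by
    rw [hk₀]
    simp only [Pi.add_apply]
    rw [Finset.sum_add_distrib, hi₁.2.2, hj₁.2.2]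
  have hij₁ : ((i₁, j₁) : (Fin n → ℕ) × (Fin n → ℕ)) ∈ s ×ˢ t :=
    Finset.mem_product.2 ⟨hi₁.1, hj₁.1⟩
  have hk₀K : k₀ ∈ K := by
    rw [hK]
    exact Finset.mem_image_of_mem _ hij₁
  -- the top coefficient of the product is c i₁ * d j₁
  have hetop : e k₀ = c i₁ * d j₁ := by
    have hmemf : ((i₁, j₁) : (Fin n → ℕ) × (Fin n → ℕ)) ∈
        (s ×ˢ t).filter (fun p => p.1 + p.2 = k₀) := Finset.mem_filter.2 ⟨hij₁, rfl⟩
    simp only [he]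
    refine Finset.sum_eq_single_of_mem _ hmemf ?_
    intro p hp hpne
    rw [Finset.mem_filter, Finset.mem_product] at hp
    obtain ⟨⟨hps, hpt⟩, hpk⟩ := hp
    by_cases hc0 : c p.1 = 0
    · rw [hc0, zero_mul]
    by_cases hd0 : d p.2 = 0
    · rw [hd0, mul_zero]
    exfalso
    -- degrees must be exactly m and m'
    have hd1 : (∑ ℓ, p.1 ℓ) = m ∧ (∑ ℓ, p.2 ℓ) = m' := by
      have h1 := hcd p.1 hps
      have h2 := hdd p.2 hpt
      have h3 : (∑ ℓ, p.1 ℓ) + (∑ ℓ, p.2 ℓ) = m + m' := by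
        rw [← hk₀deg, ← hpk]
        simp [Finset.sum_add_distrib]
      omega
    have hp1A : p.1 ∈ s.filter (fun i => c i ≠ 0 ∧ (∑ ℓ, i ℓ) = m) :=
      Finset.mem_filter.2 ⟨hps, hc0, hd1.1⟩
    have hp2B : p.2 ∈ t.filter (fun j => d j ≠ 0 ∧ (∑ ℓ, j ℓ) = m') :=
      Finset.mem_filter.2 ⟨hpt, hd0, hd1.2⟩
    have hle1 : toLex p.1 ≤ toLex i₁ := hi₁max _ hp1A
    have hle2 : toLex p.2 ≤ toLex j₁ := hj₁max _ hp2B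
    have hp1eq : p.1 = i₁ := by
      rcases lt_or_eq_of_le hle1 with hlt | heq
      · exfalso
        have h1 : toLex (p.1 + p.2) < toLex (i₁ + p.2) := lex_add_lt_add_right hlt
        have h2 : toLex (i₁ + p.2) ≤ toLex (i₁ + j₁) := by
          rcases lt_or_eq_of_le hle2 with hlt2 | heq2
          · have : toLex (p.2 + i₁) < toLex (j₁ + i₁) := lex_add_lt_add_right hlt2
            rw [add_comm p.2 i₁, add_comm j₁ i₁] at this
            exact le_of_lt this
          · have : p.2 = j₁ := toLex.injective heq2
            rw [this]
        rw [hpk] at h1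
        exact absurd (lt_of_lt_of_le h1 h2) (lt_irrefl _)
      · exact toLex.injective heq
    have hp2eq : p.2 = j₁ := by
      have := hpk
      rw [hp1eq] at this
      exact add_left_cancel this
    exact hpne (Prod.ext hp1eq hp2eq)
  have hetop_ne : e k₀ ≠ 0 := by
    rw [hetop]
    intro h
    rcases hdom _ _ (hcO i₁) (hdO j₁) h with h | h
    exacts [hi₁.2.1 h, hj₁.2.1 h]
  -- now derive contradiction from membership in the smaller filtration step
  obtain ⟨w, e', he'O, he'd, he'rep⟩ := nh_rep_of_mem O q hmem
  have hk₀w : k₀ ∉ w := by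
    intro hkw
    have := he'd k₀ hkw
    omega
  -- combine the two representations of f*g
  set E : (Fin n → ℕ) → (X → ℂ) :=
    fun k => (if k ∈ K then e k else 0) - (if k ∈ w then e' k else 0) with hE
  have hEO : ∀ k, E k ∈ O := by
    intro k
    refine sub_mem ?_ ?_ <;> split
    exacts [heO k, zero_mem _, he'O k, zero_mem _]
  have hEzero : (∑ k ∈ K ∪ w, E k * ∏ ℓ, (q ℓ) ^ (k ℓ)) = 0 := by
    have key : ∀ (s' : Finset (Fin n → ℕ)) (a : (Fin n → ℕ) → (X → ℂ)),
        s' ⊆ K ∪ w →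
        (∑ k ∈ K ∪ w, (if k ∈ s' then a k else 0) * ∏ ℓ, (q ℓ) ^ (k ℓ))
          = ∑ k ∈ s', a k * ∏ ℓ, (q ℓ) ^ (k ℓ) := by
      intro s' a hsub
      rw [← Finset.sum_subset hsub (fun x _ hx => by simp [hx])]
      exact Finset.sum_congr rfl fun k hk => by simp [hk]
    simp only [hE, sub_mul, Finset.sum_sub_distrib]
    rw [key K e Finset.subset_union_left, key w e' Finset.subset_union_right,
      ← hgrp, ← he'rep, sub_self]
  have := hindep (K ∪ w) E hEO hEzero k₀ (Finset.mem_union_left _ hk₀K)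
  rw [hE] at this
  simp only [hk₀K, if_pos, hk₀w, if_neg, not_false_iff, sub_zero] at this
  exact hetop_ne this
end

section
/- Let U be a compact connected Lie group with complexification G, K ⊆ U a closed subgroup with X = U/K, Z₀ an element of the Lie algebra fixed by Ad(K), and κ the Killing form of Lie(G). Define ω(Y)(uK) = κ(Y, Ad(u) Z₀) for Y in Lie(G). Then the unital subalgebra of C(X;ℂ) generated by {ω(Y) : Y ∈ Lie(G)} is dense in C(X;ℂ) with respect to uniform convergence, provided (i) the Cartan involution θ corresponding to Lie(U) satisfies θ(Ad_u Z₀) = Ad_u(−Z₀) for u ∈ U, (ii) Ad_u Z₀ = Z₀ iff u ∈ K, and (iii) κ is nondegenerate. -/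
/-- **Density of the algebra generated by the functions `ω(Y)`.**
Let `U` be a compact connected Lie group (here: a compact Hausdorff topological group) with
complexified Lie algebra `g` (finite dimensional over `ℂ`), adjoint action `Ad`, Killing form
`κ`, `K ⊆ U` a closed subgroup, and `Z₀` a grading element fixed by `Ad(K)`. Define
`ω(Y)(uK) = κ(Y, Ad(u)Z₀)`. Under the hypotheses (i) the Cartan involution `θ` corresponding to
`Lie(U)` satisfies `θ(Ad_u Z₀) = Ad_u(−Z₀)` (and complex conjugation of `κ` corresponds to `θ`),
(ii) `Ad_u Z₀ = Z₀` iff `u ∈ K`, and (iii) `κ` is nondegenerate, the unital subalgebra of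
`C(X;ℂ)` generated by the `ω(Y)` — realized as right-`K`-invariant continuous functions on
`U` — is dense with respect to uniform convergence. -/
theorem stmt7 {U g : Type*} [Group U] [TopologicalSpace U] [IsTopologicalGroup U]
    [CompactSpace U] [T2Space U]
    [LieRing g] [LieAlgebra ℂ g] [Module.Finite ℂ g] [Module.Free ℂ g]
    (K : Subgroup U)
    (Ad : U → g ≃ₗ[ℂ] g)
    (hAdmul : ∀ u v : U, Ad (u * v) = (Ad v).trans (Ad u))
    (hAdone : Ad 1 = LinearEquiv.refl ℂ g)
    (hAdLie : ∀ (u : U) (x y : g), Ad u ⁅x, y⁆ = ⁅Ad u x, Ad u y⁆)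
    (Z₀ : g)
    (hcont : ∀ Y : g, Continuous fun u : U => (killingForm ℂ g) Y (Ad u Z₀))
    (θ : g → g)
    (hθ : ∀ u : U, θ (Ad u Z₀) = Ad u (-Z₀))
    (hconj : ∀ Y W : g,
      (starRingEnd ℂ) ((killingForm ℂ g) Y W) = (killingForm ℂ g) (θ Y) (θ W))
    (hK : ∀ u : U, Ad u Z₀ = Z₀ ↔ u ∈ K)
    (hnondeg : ∀ Y : g, (∀ W : g, (killingForm ℂ g) Y W = 0) → Y = 0)
    -- a continuous function on X = U/K, i.e. a right-K-invariant continuous function on U: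
    (F : U → ℂ) (hFcont : Continuous F)
    (hFinv : ∀ (u : U), ∀ k ∈ K, F (u * k) = F u)
    (ε : ℝ) (hε : 0 < ε) :
    ∃ p ∈ Algebra.adjoin ℂ
        {f : U → ℂ | ∃ Y : g, f = fun u => (killingForm ℂ g) Y (Ad u Z₀)},
      ∀ u : U, ‖F u - p u‖ < ε := by
  classical
  -- Notation
  set κ := killingForm ℂ g with hκ
  -- `Ad` of an inverse
  have hAdinv : ∀ (u : U) (x : g), Ad u⁻¹ (Ad u x) = x := by
    intro u x
    have h := hAdmul u⁻¹ u
    rw [inv_mul_cancel, hAdone] at h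
    have := congrArg (fun e : g ≃ₗ[ℂ] g => e x) h
    simpa using this.symm
  -- the functions on `U`
  set f : g → U → ℂ := fun Y u => κ Y (Ad u Z₀) with hf
  have hfinv : ∀ (Y : g) (u : U), ∀ k ∈ K, f Y (u * k) = f Y u := by
    intro Y u k hk
    have h1 : Ad k Z₀ = Z₀ := (hK k).mpr hk
    simp only [hf, hAdmul u k, LinearEquiv.trans_apply, h1]
  -- descend to the quotient `X = U ⧸ K`
  have hdesc : ∀ (h : U → ℂ), (∀ u, ∀ k ∈ K, h (u * k) = h u) →
      ∀ a b : U, (QuotientGroup.leftRel K) a b → h a = h b := by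
    intro h hinv a b hab
    rw [QuotientGroup.leftRel_apply] at hab
    have := hinv a (a⁻¹ * b) hab
    rw [mul_inv_cancel_left] at this
    exact this.symm
  -- lifted continuous functions
  have hcont' : ∀ Y : g, Continuous (Quotient.lift (f Y) (hdesc (f Y) (hfinv Y))) :=
    fun Y => (hcont Y).quotient_lift _
  set ω : g → C(U ⧸ K, ℂ) := fun Y =>
    ⟨Quotient.lift (f Y) (hdesc (f Y) (hfinv Y)), hcont' Y⟩ with hω
  have hωmk : ∀ (Y : g) (u : U), ω Y (QuotientGroup.mk u) = f Y u := fun _ _ => rfl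
  -- the generating set in `C(X, ℂ)`
  set S : Set C(U ⧸ K, ℂ) := {h | ∃ Y : g, h = ω Y} with hS
  -- symmetry of the Killing form
  have hsymm : ∀ a b : g, κ a b = κ b a := fun a b => LieModule.traceForm_comm ℂ g g a b
  -- star-closedness of `S`
  have hstar : ∀ h ∈ S, star h ∈ S := by
    rintro h ⟨Y, rfl⟩
    refine ⟨-θ Y, ?_⟩
    ext x
    induction x using Quotient.ind with
    | _ u =>
      have : (QuotientGroup.mk u : U ⧸ K) = Quotient.mk _ u := rfl
      show (starRingEnd ℂ) (f Y u) = f (-θ Y) u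
      simp only [hf]
      rw [hconj Y (Ad u Z₀), hθ u, map_neg, map_neg, map_neg, LinearMap.neg_apply]
  -- the star subalgebra
  set A : StarSubalgebra ℂ C(U ⧸ K, ℂ) := StarAlgebra.adjoin ℂ S with hA
  -- it separates points
  have hsep : A.SeparatesPoints := by
    intro x y hxy
    induction x using Quotient.ind with
    | _ u =>
    induction y using Quotient.ind with
    | _ v =>
      have hne : Ad u Z₀ ≠ Ad v Z₀ := by
        intro h
        apply hxy
        have h1 : Ad (u⁻¹ * v) Z₀ = Z₀ := by
          rw [hAdmul, LinearEquiv.trans_apply, ← h, hAdinv]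
        have h2 : u⁻¹ * v ∈ K := (hK _).mp h1
        exact (QuotientGroup.eq (s := K)).mpr h2
      have hd : Ad u Z₀ - Ad v Z₀ ≠ 0 := sub_ne_zero.mpr hne
      have : ∃ Y : g, κ Y (Ad u Z₀ - Ad v Z₀) ≠ 0 := by
        by_contra hcon
        push_neg at hcon
        exact hd (hnondeg _ (fun W => (hsymm _ W) ▸ hcon W))
      obtain ⟨Y, hY⟩ := this
      refine ⟨(ω Y : (U ⧸ K) → ℂ), ⟨ω Y, ?_, rfl⟩, ?_⟩
      · exact StarAlgebra.subset_adjoin ℂ S ⟨Y, rfl⟩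
      · show f Y u ≠ f Y v
        simp only [hf]
        intro h
        apply hY
        rw [map_sub, h, sub_self]
  -- Stone–Weierstrass
  have htop : A.topologicalClosure = ⊤ :=
    ContinuousMap.starSubalgebra_topologicalClosure_eq_top_of_separatesPoints A hsep
  -- the descended function `F̄`
  set Fbar : C(U ⧸ K, ℂ) := ⟨Quotient.lift F (hdesc F hFinv), hFcont.quotient_lift _⟩
  have hFmem : Fbar ∈ closure (A : Set C(U ⧸ K, ℂ)) := by
    have : Fbar ∈ A.topologicalClosure := htop ▸ trivial
    exact this
  obtain ⟨q, hqA, hqd⟩ := Metric.mem_closure_iff.mp hFmem ε hε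
  -- `q` lies in the plain algebraic adjoin of `S`
  have hq' : q ∈ Algebra.adjoin ℂ S := by
    have h1 : q ∈ (StarAlgebra.adjoin ℂ S).toSubalgebra := hqA
    rw [StarAlgebra.adjoin_toSubalgebra] at h1
    refine Algebra.adjoin_le ?_ h1
    rintro x (hx | hx)
    · exact Algebra.subset_adjoin hx
    · have : star x ∈ S := hx
      have := hstar _ this
      rw [star_star] at this
      exact Algebra.subset_adjoin this
  -- transport along the algebra homomorphism `C(X, ℂ) →ₐ[ℂ] (U → ℂ)`
  let φ : C(U ⧸ K, ℂ) →ₐ[ℂ] (U → ℂ) :=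
    { toFun := fun h => fun u => h (QuotientGroup.mk u)
      map_one' := rfl
      map_mul' := fun _ _ => rfl
      map_zero' := rfl
      map_add' := fun _ _ => rfl
      commutes' := fun _ => rfl }
  refine ⟨φ q, ?_, ?_⟩
  · have h1 : φ q ∈ (Algebra.adjoin ℂ S).map φ := ⟨q, hq', rfl⟩
    rw [AlgHom.map_adjoin] at h1
    refine Algebra.adjoin_mono ?_ h1
    rintro x ⟨h, ⟨Y, rfl⟩, rfl⟩
    exact ⟨Y, rfl⟩
  · intro u
    have h1 : dist (Fbar (QuotientGroup.mk u)) (q (QuotientGroup.mk u)) ≤ dist Fbar q :=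
      ContinuousMap.dist_apply_le_dist _
    have h2 : Fbar (QuotientGroup.mk u) = F u := rfl
    have h3 : ‖F u - φ q u‖ =
        dist (Fbar (QuotientGroup.mk u)) (q (QuotientGroup.mk u)) := by
      rw [h2, Complex.dist_eq]; rfl
    rw [h3]
    exact lt_of_le_of_lt h1 hqd
end

section
/- In a Jordan pair (V⁺,V⁻) arising from a 3-graded Lie algebra g = n⁺ ⊕ l ⊕ n⁻ (with triple product {x,y,z} = −[[x,y],z]), the quasi-inverse satisfies the symmetry relation z^{−w} = z − Q_z(w^{−z}) whenever the pair (z, −w) is quasi-invertible, where Q_x y = ½{x,y,x}, B(x,y) = Id − D_{x,y} + Q_x Q_y, and z^w = B(z,w)^{−1}(z − Q_z w). -/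
theorem keyL {g : Type*} [LieRing g] [LieAlgebra ℂ g] (Z W V : g)
    (hC : ⁅⁅⁅Z,W⁆,Z⁆,Z⁆ = 0) (hS : ⁅⁅⁅Z,V⁆,Z⁆,Z⁆ = 0) (hWV : ⁅W,V⁆ = 0) :
    ⁅⁅Z,W⁆,⁅⁅Z,V⁆,Z⁆⁆ = -⁅⁅Z,⁅⁅Z,W⁆,V⁆⁆,Z⁆ := by
  have hVW : ⁅V,W⁆ = 0 := by rw [← lie_skew, hWV, neg_zero]
  have hTD : ⁅⁅Z,V⁆,W⁆ = ⁅⁅Z,W⁆,V⁆ := by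
    rw [lie_lie Z V W, hVW, lie_zero, zero_sub]
    exact lie_skew _ _
  have h1 : ⁅⁅⁅Z,W⁆,⁅Z,V⁆⁆,Z⁆ = ⁅⁅⁅⁅Z,W⁆,Z⁆,V⁆,Z⁆ + ⁅⁅Z,⁅⁅Z,W⁆,V⁆⁆,Z⁆ := by
    rw [leibniz_lie ⁅Z,W⁆ Z V, add_lie]
  have h3 : ⁅⁅Z,W⁆,⁅⁅Z,V⁆,Z⁆⁆ = ⁅⁅⁅Z,W⁆,⁅Z,V⁆⁆,Z⁆ + ⁅⁅⁅⁅Z,W⁆,Z⁆,V⁆,Z⁆ := by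
    have e1 : ⁅⁅Z,W⁆,⁅⁅Z,V⁆,Z⁆⁆ = ⁅⁅⁅Z,W⁆,⁅Z,V⁆⁆,Z⁆ + ⁅⁅Z,V⁆,⁅⁅Z,W⁆,Z⁆⁆ :=
      leibniz_lie _ _ _
    have e2 : ⁅⁅Z,V⁆,⁅⁅Z,W⁆,Z⁆⁆ = ⁅⁅⁅⁅Z,W⁆,Z⁆,V⁆,Z⁆ := by
      rw [← lie_skew ⁅Z,V⁆ ⁅⁅Z,W⁆,Z⁆, leibniz_lie ⁅⁅Z,W⁆,Z⁆ Z V, hC, zero_lie, zero_add]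
      exact lie_skew _ _
    rw [e1, e2]
  have h4 : ⁅⁅Z,W⁆,⁅⁅Z,V⁆,Z⁆⁆ = -⁅⁅⁅Z,W⁆,⁅Z,V⁆⁆,Z⁆ - ⁅⁅Z,⁅⁅Z,W⁆,V⁆⁆,Z⁆ := by
    have e1 : ⁅⁅Z,W⁆,⁅⁅Z,V⁆,Z⁆⁆ = ⁅⁅⁅⁅Z,V⁆,Z⁆,W⁆,Z⁆ := by
      rw [← lie_skew ⁅Z,W⁆ ⁅⁅Z,V⁆,Z⁆, leibniz_lie ⁅⁅Z,V⁆,Z⁆ Z W, hS, zero_lie, zero_add]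
      exact lie_skew _ _
    have e2 : ⁅⁅⁅Z,V⁆,Z⁆,W⁆ = -⁅⁅Z,W⁆,⁅Z,V⁆⁆ - ⁅Z,⁅⁅Z,W⁆,V⁆⁆ := by
      rw [lie_lie ⁅Z,V⁆ Z W, hTD, ← lie_skew ⁅Z,W⁆ ⁅Z,V⁆]
      abel
    rw [e1, e2, sub_lie, neg_lie, ← lie_skew Z ⁅⁅Z,W⁆,V⁆, neg_lie]
  have h3e : (3:ℂ) • ⁅⁅⁅Z,W⁆,⁅Z,V⁆⁆,Z⁆ = 0 := by
    linear_combination (norm := module) h1 - h3 + h4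
  have he : ⁅⁅⁅Z,W⁆,⁅Z,V⁆⁆,Z⁆ = 0 := by
    rcases smul_eq_zero.mp h3e with h | h
    · exact absurd h (by norm_num)
    · exact h
  linear_combination (norm := module) h4 - he


/-- **Symmetry formula for the quasi-inverse in a Jordan pair.**
The Jordan pair `(V⁺, V⁻) = (Vp, Vm)` arises from a 3-graded Lie algebra
`g = n⁺ ⊕ l ⊕ n⁻` via the triple products `{x,y,z} = −[[x,y],z]` (encoded by the injective
linear embeddings `ip, im` of the abelian subalgebras and the maps `tp, tm`). With
`Q_x y = ½{x,y,x}` and the Bergman operator `B(x,y) = Id − D_{x,y} + Q_x Q_y`, whenever the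
pair `(z, −w)` is quasi-invertible (both Bergman operators bijective), and `u = z^{−w}` and
`v = w^{−z}` denote the quasi-inverses, characterized by `B(z,−w) u = z − Q_z(−w)` and
`B(w,−z) v = w − Q_w(−z)`, the symmetry relation `z^{−w} = z − Q_z(w^{−z})` holds. -/
theorem stmt8 {g Vp Vm : Type*} [LieRing g] [LieAlgebra ℂ g]
    [AddCommGroup Vp] [Module ℂ Vp] [AddCommGroup Vm] [Module ℂ Vm]
    (ip : Vp →ₗ[ℂ] g) (im : Vm →ₗ[ℂ] g)
    (hip : Function.Injective ip) (him : Function.Injective im)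
    (habp : ∀ x x' : Vp, ⁅ip x, ip x'⁆ = 0)
    (habm : ∀ y y' : Vm, ⁅im y, im y'⁆ = 0)
    (tp : Vp → Vm → Vp → Vp) (tm : Vm → Vp → Vm → Vm)
    (htp : ∀ x y z, ip (tp x y z) = -⁅⁅ip x, im y⁆, ip z⁆)
    (htm : ∀ y x w, im (tm y x w) = -⁅⁅im y, ip x⁆, im w⁆)
    (z : Vp) (w : Vm)
    -- quasi-invertibility of (z, -w): the Bergman operators B(z,-w) and B(-w,z)... are bijective
    (hB : Function.Bijective fun u : Vp =>
      u - tp z (-w) u + (2⁻¹ : ℂ) • tp z ((2⁻¹ : ℂ) • tm (-w) u (-w)) z)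
    (hB' : Function.Bijective fun v : Vm =>
      v - tm w (-z) v + (2⁻¹ : ℂ) • tm w ((2⁻¹ : ℂ) • tp (-z) v (-z)) w)
    (u : Vp)
    (hu : u - tp z (-w) u + (2⁻¹ : ℂ) • tp z ((2⁻¹ : ℂ) • tm (-w) u (-w)) z
        = z - (2⁻¹ : ℂ) • tp z (-w) z)
    (v : Vm)
    (hv : v - tm w (-z) v + (2⁻¹ : ℂ) • tm w ((2⁻¹ : ℂ) • tp (-z) v (-z)) w
        = w - (2⁻¹ : ℂ) • tm w (-z) w) :
    u = z - (2⁻¹ : ℂ) • tp z v z := by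
  have key : (z - (2⁻¹ : ℂ) • tp z v z) - tp z (-w) (z - (2⁻¹ : ℂ) • tp z v z)
      + (2⁻¹ : ℂ) • tp z ((2⁻¹ : ℂ) • tm (-w) (z - (2⁻¹ : ℂ) • tp z v z) (-w)) z
      = z - (2⁻¹ : ℂ) • tp z (-w) z := by
    apply hip
    have hvg := congrArg im hv
    simp only [map_sub, map_add, map_smul, map_neg, htp, htm, lie_neg, neg_lie, neg_neg,
      lie_sub, sub_lie, lie_add, add_lie, lie_smul, smul_lie, smul_neg, neg_sub] at hvg ⊢
    have hC : ⁅⁅⁅ip z, im w⁆, ip z⁆, ip z⁆ = 0 := by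
      have h := habp (tp z (-w) z) z
      rw [htp] at h
      simp only [map_neg, lie_neg, neg_lie, neg_neg, neg_eq_zero] at h
      exact h
    have hS : ⁅⁅⁅ip z, im v⁆, ip z⁆, ip z⁆ = 0 := by
      have h := habp (tp z v z) z
      rw [htp] at h
      simp only [neg_lie, neg_eq_zero] at h
      exact h
    have hL := keyL (ip z) (im w) (im v) hC hS (habm w v)
    have hL'' : ⁅⁅ip z, im w⁆, ⁅⁅ip z, im v⁆, ip z⁆⁆ = ⁅⁅ip z, ⁅⁅im w, ip z⁆, im v⁆⁆, ip z⁆ := by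
      rw [hL, show ⁅⁅im w, ip z⁆, im v⁆ = -⁅⁅ip z, im w⁆, im v⁆ by
        rw [← lie_skew (ip z) (im w), neg_lie, neg_neg], lie_neg, neg_lie]
    have hsub := congrArg (fun t => ⁅⁅ip z, t⁆, ip z⁆) hvg
    simp only [lie_sub, sub_lie, lie_add, add_lie, lie_smul, smul_lie] at hsub
    linear_combination (norm := module) (2⁻¹:ℂ) • hsub - (2⁻¹:ℂ) • hL''
  exact hB.injective (hu.trans key.symm)
end

section
/- Let g be a complex simple Lie algebra with Cartan subalgebra h, simple roots α₁,…,α_ℓ, and 3-grading g = n⁺ ⊕ l ⊕ n⁻ determined by the parabolic at α₁ (Hermitian case: |m₁(β)| ≤ 1 for all roots β). Let γ_m = m₁γ₁ + ⋯ + m_rγ_r with m₁ ≥ ⋯ ≥ m_r ≥ 0, where γ₁,…,γ_r are the strongly orthogonal non-compact roots, and let β be a weight of n⁺ (i.e. a non-compact positive root). Suppose γ_m + β is dominant integral for the compact root system Φ_c. If β ± α_i cannot both be roots (e.g. when the root system is simply laced), and β + α_i is a root, then γ_m(H_i) > 0, where H_i is the coroot of α_i. -/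
/-- **Chain-length estimate in the Hermitian 3-graded situation.**
Let `Φ` be the set of roots of a complex simple Lie algebra, `β ∈ Φ` a weight of `n⁺`
(a non-compact positive root), `α = α_i` a compact simple root, and `f = ⟨·, H_i⟩` evaluation
at the coroot. Let `a, b` be the lengths of the `α`-chain `β + kα` (`−a ≤ k ≤ b`) through `β`,
so that `b − a = −β(H_i)` and (for non-compact `β` and compact `α`) `a + b ≤ 2`. Let
`γ = γ_m = m₁γ₁ + ⋯ + m_rγ_r` be dominant (`f γ ≥ 0`) with `γ_m + β` dominant integral for
`Φ_c` (`f γ + f β ≥ 0`). If `β ± α` cannot both be roots (e.g. in the simply laced case) and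
`β + α` is a root, then `γ_m(H_i) > 0`. -/
theorem stmt15 {M : Type*} [AddCommGroup M]
    (Φ : Set M) (γ β α : M) (f : M →+ ℤ)
    (a b : ℕ)
    -- the α-chain β + kα, −a ≤ k ≤ b, consists of roots:
    (hchain : ∀ k : ℤ, -(a : ℤ) ≤ k → k ≤ (b : ℤ) → β + k • α ∈ Φ)
    (htop : β + ((b : ℤ) + 1) • α ∉ Φ)
    (hbot : β + (-((a : ℤ) + 1)) • α ∉ Φ)
    -- standard facts about root chains:
    (hdiff : (b : ℤ) - (a : ℤ) = -(f β))
    (hlen : a + b ≤ 2)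
    -- β + α is a root, and β ± α cannot both be roots:
    (hplus : β + (1 : ℤ) • α ∈ Φ)
    (hnotboth : ¬(β + (1 : ℤ) • α ∈ Φ ∧ β + (-1 : ℤ) • α ∈ Φ))
    -- γ_m + β dominant integral for Φ_c, and γ_m dominant:
    (hdom : 0 ≤ f γ + f β)
    (hγ : 0 ≤ f γ) :
    0 < f γ := by
  have hb : 1 ≤ (b : ℤ) := by
    by_contra h
    push_neg at h
    have : (b : ℤ) = 0 := by omega
    exact htop (by rw [this]; simpa using hplus)
  have ha : (a : ℤ) = 0 := by
    by_contra h
    have ha1 : 1 ≤ (a : ℤ) := by omega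
    exact hnotboth ⟨hplus, hchain (-1) (by omega) (by omega)⟩
  have hfb : f β ≤ -1 := by omega
  omega
end

section
/- Generalized Taylor expansion: let f be a nearly holomorphic section on n⁺ ⊆ X of degree m with expansion f(z) = Σ_{|i|≤m} f_i(z) q(z)^i, where q(z) = z̄^{−z}. Then the Taylor coefficients of the holomorphic coefficient sections f_i(z) = Σ_j c_{ij} z^j are given by c_{ij} = (1/(i! j!)) δ^j D̄^i f(0). -/
open scoped BigOperators

/-- The iterated operator `D^i = ∏_ℓ (D_ℓ)^{i_ℓ}` attached to a multi-index `i`. -/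
def multiEnd {A : Type*} [AddCommGroup A] [Module ℂ A] {n : ℕ}
    (D : Fin n → Module.End ℂ A) (i : Fin n → ℕ) : Module.End ℂ A :=
  (List.finRange n).foldr (fun ℓ acc => (D ℓ) ^ (i ℓ) * acc) 1

/-- The multi-index factorial `i! = ∏_ℓ (i_ℓ)!`. -/
def mfact {n : ℕ} (i : Fin n → ℕ) : ℕ := ∏ ℓ, (i ℓ).factorial

namespace Stmt18Aux

variable {X : Type*} {E : Type*} [AddCommGroup E] [Module ℂ E] {n : ℕ}

lemma op_one (Op : Module.End ℂ (X → ℂ))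
    (h : ∀ a b : X → ℂ, Op (a * b) = Op a * b + a * Op b) : Op (1 : X → ℂ) = 0 := by
  have h1 := h 1 1
  simp only [one_mul, mul_one] at h1
  exact (left_eq_add.mp h1)

lemma op_pow_zero (Op : Module.End ℂ (X → ℂ))
    (h : ∀ a b : X → ℂ, Op (a * b) = Op a * b + a * Op b)
    (a : X → ℂ) (ha : Op a = 0) : ∀ m, Op (a ^ m) = 0 := by
  intro m
  induction m with
  | zero => simpa using op_one Op h
  | succ m ih => rw [pow_succ, h, ih, ha]; simp

lemma op_prod_zero (Op : Module.End ℂ (X → ℂ))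
    (h : ∀ a b : X → ℂ, Op (a * b) = Op a * b + a * Op b)
    {ι : Type*} (s : Finset ι) (g : ι → X → ℂ) (hg : ∀ t ∈ s, Op (g t) = 0) :
    Op (∏ t ∈ s, g t) = 0 := by
  refine Finset.prod_induction g (fun z => Op z = 0) ?_ (op_one Op h) hg
  intro a b ha hb
  rw [h, ha, hb]; simp

lemma pow_step (Op : Fin n → Module.End ℂ (X → ℂ)) (G : (Fin n → ℕ) → X → ℂ)
    (hstep : ∀ ℓ v, Op ℓ (G v) = ((v ℓ : ℂ)) • G (fun k => v k - if k = ℓ then 1 else 0))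
    (ℓ : Fin n) :
    ∀ (m : ℕ) (v), ((Op ℓ) ^ m) (G v)
      = ((v ℓ).descFactorial m : ℂ) • G (fun k => v k - if k = ℓ then m else 0) := by
  intro m
  induction m with
  | zero =>
    intro v
    simp only [pow_zero, Module.End.one_apply, Nat.descFactorial_zero, Nat.cast_one, one_smul]
    funext k
    simp
  | succ m ih =>
    intro v
    rw [pow_succ, Module.End.mul_apply, hstep, map_smul, ih]
    rw [if_pos rfl, smul_smul]
    have hidx : (fun k => (fun k' => v k' - if k' = ℓ then 1 else 0) k - if k = ℓ then m else 0)
        = (fun k => v k - if k = ℓ then m + 1 else 0) := by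
      funext k
      by_cases hk : k = ℓ <;> simp [hk, Nat.sub_sub, Nat.add_comm]
    rw [hidx]
    congr 1
    have hc : v ℓ * (v ℓ - 1).descFactorial m = (v ℓ).descFactorial (m + 1) := by
      cases h : v ℓ with
      | zero => simp
      | succ a => rw [Nat.succ_sub_one, Nat.succ_descFactorial_succ]
    push_cast [← hc]
    ring

lemma multi_step (Op : Fin n → Module.End ℂ (X → ℂ)) (G : (Fin n → ℕ) → X → ℂ)
    (hstep : ∀ ℓ v, Op ℓ (G v) = ((v ℓ : ℂ)) • G (fun k => v k - if k = ℓ then 1 else 0))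
    (i : Fin n → ℕ) :
    ∀ (L : List (Fin n)), L.Nodup → ∀ v,
      (L.foldr (fun ℓ acc => (Op ℓ) ^ (i ℓ) * acc) 1) (G v)
        = ((L.map (fun ℓ => (v ℓ).descFactorial (i ℓ))).prod : ℂ)
            • G (fun k => v k - if k ∈ L then i k else 0) := by
  intro L
  induction L with
  | nil =>
    intro _ v
    simp
  | cons ℓ L ih =>
    intro hnd v
    obtain ⟨hℓ, hnd'⟩ := List.nodup_cons.mp hnd
    rw [List.foldr_cons, Module.End.mul_apply, ih hnd' v, map_smul,
      pow_step Op G hstep ℓ (i ℓ)]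
    rw [if_neg hℓ, Nat.sub_zero, smul_smul]
    have hidx : (fun k => (fun k' => v k' - if k' ∈ L then i k' else 0) k
          - if k = ℓ then i ℓ else 0)
        = (fun k => v k - if k ∈ ℓ :: L then i k else 0) := by
      funext k
      by_cases hk : k = ℓ
      · subst hk
        simp [hℓ]
      · by_cases hkL : k ∈ L <;> simp [hk, hkL]
    rw [hidx]
    congr 1
    push_cast [List.map_cons, List.prod_cons]
    ring

lemma eval0 (x₀ : X) (Op : Fin n → Module.End ℂ (X → ℂ)) (G : (Fin n → ℕ) → X → ℂ)
    (hstep : ∀ ℓ v, Op ℓ (G v) = ((v ℓ : ℂ)) • G (fun k => v k - if k = ℓ then 1 else 0))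
    (hG0 : ∀ v, G v x₀ = if v = 0 then 1 else 0) (i v : Fin n → ℕ) :
    (multiEnd Op i) (G v) x₀ = if v = i then (mfact i : ℂ) else 0 := by
  have h := multi_step Op G hstep i (List.finRange n) (List.nodup_finRange n) v
  rw [multiEnd, h]
  have hidx : (fun k => v k - if k ∈ List.finRange n then i k else 0)
      = fun k => v k - i k := by
    funext k; rw [if_pos (List.mem_finRange k)]
  rw [hidx, Pi.smul_apply, hG0, smul_eq_mul]
  have hprod : ((List.finRange n).map (fun ℓ => (v ℓ).descFactorial (i ℓ))).prod
      = ∏ ℓ, (v ℓ).descFactorial (i ℓ) := (Fin.prod_univ_def _).symm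
  by_cases hv : v = i
  · subst hv
    have h1 : (fun k => v k - v k) = (0 : Fin n → ℕ) := by funext k; simp
    rw [h1, if_pos rfl, if_pos rfl, mul_one, hprod]
    norm_cast
    simp [mfact, Nat.descFactorial_self]
  · rw [if_neg hv]
    obtain ⟨k, hk⟩ := Function.ne_iff.mp hv
    rcases Nat.lt_or_ge (v k) (i k) with hlt | hge
    · have hz : (v k).descFactorial (i k) = 0 := Nat.descFactorial_eq_zero_iff_lt.mpr hlt
      have hp : ∏ ℓ, (v ℓ).descFactorial (i ℓ) = 0 :=
        Finset.prod_eq_zero (Finset.mem_univ k) hz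
      rw [hprod, hp]
      simp
    · have hgt : i k < v k := lt_of_le_of_ne hge (Ne.symm hk)
      have hne : (fun k => v k - i k) ≠ (0 : Fin n → ℕ) := by
        intro hc
        have := congrFun hc k
        simp only [Pi.zero_apply] at this
        omega
      rw [if_neg hne, mul_zero]

lemma foldr_mul_right (Op : Fin n → Module.End ℂ (X → ℂ))
    (hL : ∀ ℓ (a b : X → ℂ), Op ℓ (a * b) = Op ℓ a * b + a * Op ℓ b)
    (b : X → ℂ) (hb : ∀ ℓ, Op ℓ b = 0) (i : Fin n → ℕ) :
    ∀ (L : List (Fin n)) (a : X → ℂ),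
      (L.foldr (fun ℓ acc => (Op ℓ) ^ (i ℓ) * acc) 1) (a * b)
        = ((L.foldr (fun ℓ acc => (Op ℓ) ^ (i ℓ) * acc) 1) a) * b := by
  have hpow : ∀ (ℓ : Fin n) (m : ℕ) (a : X → ℂ),
      ((Op ℓ) ^ m) (a * b) = (((Op ℓ) ^ m) a) * b := by
    intro ℓ m
    induction m with
    | zero => intro a; simp
    | succ m ih =>
      intro a
      rw [pow_succ, Module.End.mul_apply, Module.End.mul_apply, hL, hb, mul_zero, add_zero, ih]
  intro L
  induction L with
  | nil => intro a; simp
  | cons ℓ L ih =>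
    intro a
    rw [List.foldr_cons, Module.End.mul_apply, ih, hpow, Module.End.mul_apply]

lemma foldr_mul_left (Op : Fin n → Module.End ℂ (X → ℂ))
    (hL : ∀ ℓ (a b : X → ℂ), Op ℓ (a * b) = Op ℓ a * b + a * Op ℓ b)
    (a : X → ℂ) (ha : ∀ ℓ, Op ℓ a = 0) (i : Fin n → ℕ) :
    ∀ (L : List (Fin n)) (b : X → ℂ),
      (L.foldr (fun ℓ acc => (Op ℓ) ^ (i ℓ) * acc) 1) (a * b)
        = a * ((L.foldr (fun ℓ acc => (Op ℓ) ^ (i ℓ) * acc) 1) b) := by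
  have hpow : ∀ (ℓ : Fin n) (m : ℕ) (b : X → ℂ),
      ((Op ℓ) ^ m) (a * b) = a * (((Op ℓ) ^ m) b) := by
    intro ℓ m
    induction m with
    | zero => intro b; simp
    | succ m ih =>
      intro b
      rw [pow_succ, Module.End.mul_apply, Module.End.mul_apply, hL, ha, zero_mul, zero_add, ih]
  intro L
  induction L with
  | nil => intro b; simp
  | cons ℓ L ih =>
    intro b
    rw [List.foldr_cons, Module.End.mul_apply, ih, hpow, Module.End.mul_apply]

lemma vec_transfer (Dv : Fin n → Module.End ℂ (X → E)) (Ds : Fin n → Module.End ℂ (X → ℂ))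
    (hDL : ∀ ℓ (a : X → ℂ) (e : E), Dv ℓ (fun x => a x • e) = fun x => (Ds ℓ a) x • e)
    (i : Fin n → ℕ) (a : X → ℂ) (e : E) :
    (multiEnd Dv i) (fun x => a x • e) = fun x => ((multiEnd Ds i) a) x • e := by
  have hpow : ∀ (ℓ : Fin n) (m : ℕ) (a : X → ℂ),
      ((Dv ℓ) ^ m) (fun x => a x • e) = fun x => (((Ds ℓ) ^ m) a) x • e := by
    intro ℓ m
    induction m with
    | zero => intro a; simp
    | succ m ih =>
      intro a
      simp only [pow_succ, Module.End.mul_apply]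
      rw [hDL, ih]
  rw [multiEnd, multiEnd]
  induction (List.finRange n) generalizing a with
  | nil => simp
  | cons ℓ L ih =>
    simp only [List.foldr_cons, Module.End.mul_apply]
    rw [ih, hpow]

end Stmt18Aux



/-- **Generalized Taylor expansion formula for nearly holomorphic sections.**
Let `f` be a nearly holomorphic section on `n⁺ ⊆ X` (with origin `x₀ = 0`) with expansion
`f(z) = Σ_{i} f_i(z) q(z)^i`, where `q(z) = z̄^{−z}` and the holomorphic coefficients are
polynomials `f_i(z) = Σ_j c_{ij} z^j` (the monomials `z^j` are `zmon j`). With the commuting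
operators `D̄_ℓ` and `δ_ℓ = ∂_{c_ℓ} + ∂̄_{Q_{z̄}c_ℓ}` — satisfying Leibniz rules, the key
identities `D̄_ℓ q_k = δ_{ℓk}`, `δ_ℓ q_k = 0`, `D̄_ℓ z^j = 0`, `δ_ℓ z^j = j_ℓ z^{j−e_ℓ}` and
`q(0) = 0` — the Taylor coefficients are given by `c_{ij} = (1/(i! j!)) δ^j D̄^i f(0)`,
i.e. `δ^j D̄^i f (x₀) = i! · j! · c_{ij}`. -/
theorem stmt18 {X E : Type*} [AddCommGroup E] [Module ℂ E] {n : ℕ}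
    (x₀ : X)
    (q : Fin n → X → ℂ)
    (zmon : (Fin n → ℕ) → X → ℂ)
    (Dsc δsc : Fin n → Module.End ℂ (X → ℂ))
    (D δ' : Fin n → Module.End ℂ (X → E))
    (hDscL : ∀ ℓ (a b : X → ℂ), Dsc ℓ (a * b) = Dsc ℓ a * b + a * Dsc ℓ b)
    (hδscL : ∀ ℓ (a b : X → ℂ), δsc ℓ (a * b) = δsc ℓ a * b + a * δsc ℓ b)
    (hDL : ∀ ℓ (a : X → ℂ) (e : E), D ℓ (fun x => a x • e) = fun x => (Dsc ℓ a) x • e)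
    (hδL : ∀ ℓ (a : X → ℂ) (e : E), δ' ℓ (fun x => a x • e) = fun x => (δsc ℓ a) x • e)
    (hcommD : ∀ k ℓ, Commute (D k) (D ℓ))
    (hcommδ : ∀ k ℓ, Commute (δ' k) (δ' ℓ))
    (hcommDδ : ∀ k ℓ, Commute (D k) (δ' ℓ))
    (hDq : ∀ ℓ k, Dsc ℓ (q k) = if ℓ = k then 1 else 0)
    (hδq : ∀ ℓ k, δsc ℓ (q k) = 0)
    (hDz : ∀ ℓ j, Dsc ℓ (zmon j) = 0)
    (hδz : ∀ ℓ j, δsc ℓ (zmon j) =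
      (j ℓ : ℂ) • zmon (fun k => j k - if k = ℓ then 1 else 0))
    (hq0 : ∀ ℓ, q ℓ x₀ = 0)
    (hz0 : ∀ j, zmon j x₀ = if j = 0 then 1 else 0)
    (S T : Finset (Fin n → ℕ)) (c : (Fin n → ℕ) → (Fin n → ℕ) → E)
    (f : X → E)
    (hf : f = fun x => ∑ i ∈ S, ∑ j ∈ T, ((∏ ℓ, (q ℓ x) ^ (i ℓ)) * zmon j x) • c i j)
    (i : Fin n → ℕ) (hi : i ∈ S) (j : Fin n → ℕ) (hj : j ∈ T) :
    (multiEnd δ' j) ((multiEnd D i) f) x₀ = (mfact i * mfact j : ℕ) • c i j := by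
  classical
  open Stmt18Aux in
  set Qf : (Fin n → ℕ) → X → ℂ := fun v x => ∏ ℓ, (q ℓ x) ^ (v ℓ) with hQf
  have hQprod : ∀ v, Qf v = ∏ ℓ : Fin n, (q ℓ) ^ (v ℓ) := by
    intro v; funext x; simp [hQf, Finset.prod_apply]
  have hQδ : ∀ ℓ v, δsc ℓ (Qf v) = 0 := by
    intro ℓ v
    rw [hQprod]
    refine op_prod_zero _ (hδscL ℓ) _ _ ?_
    intro t _
    exact op_pow_zero _ (hδscL ℓ) _ (hδq ℓ t) _
  have hpowq : ∀ (ℓ : Fin n) (m : ℕ),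
      Dsc ℓ ((q ℓ) ^ m) = (m : ℂ) • (q ℓ) ^ (m - 1) := by
    intro ℓ m
    induction m with
    | zero => simpa using op_one (Dsc ℓ) (hDscL ℓ)
    | succ m ih =>
      rw [pow_succ, hDscL, ih, hDq, if_pos rfl, mul_one]
      cases m with
      | zero => simp
      | succ m' =>
        rw [Nat.succ_sub_one, Nat.succ_sub_one, smul_mul_assoc, ← pow_succ]
        push_cast
        module
  have hQstep : ∀ ℓ v, Dsc ℓ (Qf v)
      = ((v ℓ : ℂ)) • Qf (fun k => v k - if k = ℓ then 1 else 0) := by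
    intro ℓ v
    have hsplit : Qf v = (q ℓ) ^ (v ℓ) * ∏ k ∈ Finset.univ.erase ℓ, (q k) ^ (v k) := by
      rw [hQprod]
      exact (Finset.mul_prod_erase _ _ (Finset.mem_univ ℓ)).symm
    have hR : Dsc ℓ (∏ k ∈ Finset.univ.erase ℓ, (q k) ^ (v k)) = 0 := by
      refine op_prod_zero _ (hDscL ℓ) _ _ ?_
      intro t ht
      refine op_pow_zero _ (hDscL ℓ) _ ?_ _
      rw [hDq, if_neg]
      exact fun h => (Finset.mem_erase.mp ht).1 h.symm
    rw [hsplit, hDscL, hR, mul_zero, add_zero, hpowq, smul_mul_assoc]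
    congr 1
    rw [hQprod, ← Finset.mul_prod_erase _ _ (Finset.mem_univ ℓ)]
    congr 1
    · rw [if_pos rfl]
    · refine Finset.prod_congr rfl ?_
      intro t ht
      rw [if_neg (Finset.mem_erase.mp ht).1, Nat.sub_zero]
  have hQ0 : ∀ v, Qf v x₀ = if v = 0 then 1 else 0 := by
    intro v
    by_cases hv : v = 0
    · subst hv; simp [hQf]
    · rw [if_neg hv]
      obtain ⟨k, hk⟩ := Function.ne_iff.mp hv
      simp only [hQf]
      refine Finset.prod_eq_zero (Finset.mem_univ k) ?_
      rw [hq0, zero_pow]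
      simpa using hk
  -- scalar evaluation of each term
  have key : ∀ i' j', (multiEnd δsc j) ((multiEnd Dsc i) (Qf i' * zmon j')) x₀
      = (if i' = i then (mfact i : ℂ) else 0) * (if j' = j then (mfact j : ℂ) else 0) := by
    intro i' j'
    have h1 : (multiEnd Dsc i) (Qf i' * zmon j') = ((multiEnd Dsc i) (Qf i')) * zmon j' :=
      foldr_mul_right Dsc hDscL (zmon j') (fun ℓ => hDz ℓ j') i (List.finRange n) (Qf i')
    have h2 : ∀ ℓ, δsc ℓ ((multiEnd Dsc i) (Qf i')) = 0 := by
      intro ℓ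
      rw [multiEnd, multi_step Dsc Qf hQstep i (List.finRange n) (List.nodup_finRange n),
        map_smul, hQδ, smul_zero]
    have h3 : (multiEnd δsc j) (((multiEnd Dsc i) (Qf i')) * zmon j')
        = ((multiEnd Dsc i) (Qf i')) * (multiEnd δsc j) (zmon j') :=
      foldr_mul_left δsc hδscL _ h2 j (List.finRange n) (zmon j')
    rw [h1, h3, Pi.mul_apply,
      eval0 x₀ Dsc Qf hQstep hQ0 i i',
      eval0 x₀ δsc zmon hδz hz0 j j']
  have hf' : f = ∑ i' ∈ S, ∑ j' ∈ T, (fun x => ((Qf i' * zmon j') x) • c i' j') := by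
    rw [hf]
    funext x
    simp [Finset.sum_apply, hQf]
  have step1 : (multiEnd δ' j) ((multiEnd D i) f)
      = ∑ i' ∈ S, ∑ j' ∈ T,
          (fun x => ((multiEnd δsc j) ((multiEnd Dsc i) (Qf i' * zmon j'))) x • c i' j') := by
    rw [hf']
    simp only [map_sum]
    simp only [vec_transfer D Dsc hDL i]
    simp only [vec_transfer δ' δsc hδL j]
  rw [step1]
  rw [Finset.sum_apply]
  simp only [Finset.sum_apply]
  simp only [key]
  have collapse : ∀ i' j',
      ((if i' = i then (mfact i : ℂ) else 0) * (if j' = j then (mfact j : ℂ) else 0)) • c i' j'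
        = if i' = i then (if j' = j then ((mfact i * mfact j : ℕ) : ℂ) • c i' j' else 0)
          else 0 := by
    intro i' j'
    split_ifs <;> push_cast <;> simp
  simp only [collapse]
  rw [Finset.sum_eq_single_of_mem i hi (fun b _ hb => by simp [hb])]
  simp only [if_pos rfl]
  rw [Finset.sum_eq_single_of_mem j hj (fun b _ hb => by simp [hb])]
  simp only [if_pos rfl]
  rw [Nat.cast_smul_eq_nsmul]
  simp
end
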